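/- arXiv:1003.4449 — 2 statements merged into one kernel-verified Lean document; each statement's English description precedes it below -/
import Mathlib

section
/- For a topological space X, the subgroup D^⊠ of the normalized cubical chain complex C_*(X), generated in each dimension i by the elements σ + σ ∘ φ_k where σ : [0,1]^i → X is a singular cube, 1 ≤ k < i, and φ_k is the self-homeomorphism of [0,1]^i transposing the k-th and (k+1)-st coordinates, is a subcomplex: the cubical boundary of any generator σ + σ ∘ φ_k again lies in D^⊠. -/
open unitInterval

/-- A singular cube of dimension `n` in `X`. -/
abbrev Cube (n : ℕ) (X : Type*) [TopologicalSpace X] := C((Fin n → I), X)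

/-- The face of a singular cube obtained by setting the `k`-th coordinate equal to `ε`. -/
noncomputable def cubeFace {X : Type*} [TopologicalSpace X] {n : ℕ}
    (c : Cube (n + 1) X) (k : Fin (n + 1)) (ε : I) : Cube n X :=
  c.comp ⟨fun t => (Fin.insertNth k ε t : Fin (n + 1) → I),
    Continuous.finInsertNth k continuous_const continuous_id⟩

/-- A cube is degenerate if it factors through the projection forgetting a coordinate. -/
def IsDegenerateCube {X : Type*} [TopologicalSpace X] {n : ℕ} (c : Cube n X) : Prop :=
  ∃ k : Fin n, ∀ (t : Fin n → I) (s : I), c t = c (Function.update t k s)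

/-- The cubical boundary `∂σ = ∑_{k=1}^{i} ∑_{ε=0,1} (-1)^{k+ε} σ ∘ δ_{k,ε}`. -/
noncomputable def cubeBoundary (X : Type*) [TopologicalSpace X] (n : ℕ) :
    FreeAbelianGroup (Cube (n + 1) X) →+ FreeAbelianGroup (Cube n X) :=
  FreeAbelianGroup.lift fun c =>
    ∑ k : Fin (n + 1), ((-1 : ℤ) ^ ((k : ℕ) + 1)) •
      (FreeAbelianGroup.of (cubeFace c k 0) - FreeAbelianGroup.of (cubeFace c k 1))

/-- Precomposition of a cube with the transposition of two coordinates. -/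
def transpCube {X : Type*} [TopologicalSpace X] {n : ℕ}
    (c : Cube n X) (a b : Fin n) : Cube n X :=
  c.comp ⟨fun t => t ∘ (Equiv.swap a b), by exact continuous_pi fun j => continuous_apply _⟩

/-- The subgroup of degenerate chains. -/
def DegenSub (X : Type*) [TopologicalSpace X] (n : ℕ) :
    AddSubgroup (FreeAbelianGroup (Cube n X)) :=
  AddSubgroup.closure { z | ∃ c : Cube n X, IsDegenerateCube c ∧ z = FreeAbelianGroup.of c }

/-- The subgroup `D^⊠` generated by the elements `σ + σ ∘ φ_k` for coordinate
transpositions `φ_k`, `1 ≤ k < n`. -/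
def Dboxslash (X : Type*) [TopologicalSpace X] (n : ℕ) :
    AddSubgroup (FreeAbelianGroup (Cube n X)) :=
  AddSubgroup.closure { z | ∃ (c : Cube n X) (k : ℕ) (h : k + 1 < n),
    z = FreeAbelianGroup.of c +
      FreeAbelianGroup.of (transpCube c ⟨k, by omega⟩ ⟨k + 1, h⟩) }

/- ## Auxiliary lemmas -/

lemma insNth {β : Type*} {n : ℕ} (k j : ℕ) (hk : k < n+1) (hj : j < n+1) (x : β) (t : Fin n → β) :
    (Fin.insertNth ⟨k, hk⟩ x t : Fin (n+1) → β) ⟨j, hj⟩ =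
      if h : j < k then t ⟨j, by omega⟩
      else if h' : j = k then x
      else t ⟨j - 1, by omega⟩ := by
  split_ifs with h h'
  · rw [Fin.insertNth_apply_below (show (⟨j, hj⟩ : Fin (n+1)) < ⟨k, hk⟩ from h)]
    simp only [eq_rec_constant]
    congr 1
  · have e : (⟨j, hj⟩ : Fin (n+1)) = ⟨k, hk⟩ := Fin.ext h'
    rw [e, Fin.insertNth_apply_same]
  · rw [Fin.insertNth_apply_above (show (⟨k, hk⟩ : Fin (n+1)) < (⟨j, hj⟩ : Fin (n+1)) from by
      simp [Fin.lt_def]; omega)]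
    simp only [eq_rec_constant]
    congr 1

lemma swap_mk {n : ℕ} (a b j : ℕ) (ha : a < n) (hb : b < n) (hj : j < n) :
    Equiv.swap (⟨a, ha⟩ : Fin n) ⟨b, hb⟩ ⟨j, hj⟩ =
      if j = a then ⟨b, hb⟩ else if j = b then ⟨a, ha⟩ else ⟨j, hj⟩ := by
  rw [Equiv.swap_apply_def]
  simp [Fin.ext_iff]

section

variable {β : Type*} {n : ℕ}

lemma core_eq1 (k : ℕ) (hk : k + 1 < n + 1) (ε : β) (t : Fin n → β) :
    (Fin.insertNth ⟨k, Nat.lt_of_succ_lt hk⟩ ε t : Fin (n+1) → β) ∘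
        Equiv.swap (⟨k, Nat.lt_of_succ_lt hk⟩ : Fin (n+1)) ⟨k+1, hk⟩
      = (Fin.insertNth ⟨k+1, hk⟩ ε t : Fin (n+1) → β) := by
  funext ⟨iv, hiv⟩
  simp only [Function.comp_apply]
  rw [swap_mk]
  split_ifs <;>
    simp only [insNth] <;>
    split_ifs <;>
    first | rfl | omega | (congr 1; simp only [Fin.mk.injEq]; omega)

lemma core_eq2 (k : ℕ) (hk : k + 1 < n + 1) (ε : β) (t : Fin n → β) :
    (Fin.insertNth ⟨k+1, hk⟩ ε t : Fin (n+1) → β) ∘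
        Equiv.swap (⟨k, Nat.lt_of_succ_lt hk⟩ : Fin (n+1)) ⟨k+1, hk⟩
      = (Fin.insertNth ⟨k, Nat.lt_of_succ_lt hk⟩ ε t : Fin (n+1) → β) := by
  funext ⟨iv, hiv⟩
  simp only [Function.comp_apply]
  rw [swap_mk]
  split_ifs <;>
    simp only [insNth] <;>
    split_ifs <;>
    first | rfl | omega | (congr 1; simp only [Fin.mk.injEq]; omega)

lemma core_lt (k : ℕ) (hk : k + 1 < n + 1) (j : ℕ) (hj : j < n + 1) (hjk : j < k)
    (ε : β) (t : Fin n → β) :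
    (Fin.insertNth ⟨j, hj⟩ ε t : Fin (n+1) → β) ∘
        Equiv.swap (⟨k, Nat.lt_of_succ_lt hk⟩ : Fin (n+1)) ⟨k+1, hk⟩
      = (Fin.insertNth ⟨j, hj⟩ ε
          (t ∘ Equiv.swap (⟨k-1, by omega⟩ : Fin n) ⟨k-1+1, by omega⟩) : Fin (n+1) → β) := by
  funext ⟨iv, hiv⟩
  simp only [Function.comp_apply]
  rw [swap_mk]
  split_ifs <;>
    simp only [insNth] <;>
    split_ifs <;>
    (try simp only [Function.comp_apply]) <;>
    (try rw [swap_mk]) <;>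
    (try split_ifs) <;>
    first | rfl | omega | (congr 1; simp only [Fin.mk.injEq]; omega)

lemma core_gt (k : ℕ) (j : ℕ) (hj : j < n + 1) (hjk : k + 1 < j)
    (ε : β) (t : Fin n → β) :
    (Fin.insertNth ⟨j, hj⟩ ε t : Fin (n+1) → β) ∘
        Equiv.swap (⟨k, by omega⟩ : Fin (n+1)) ⟨k+1, by omega⟩
      = (Fin.insertNth ⟨j, hj⟩ ε
          (t ∘ Equiv.swap (⟨k, by omega⟩ : Fin n) ⟨k+1, by omega⟩) : Fin (n+1) → β) := by
  funext ⟨iv, hiv⟩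
  simp only [Function.comp_apply]
  rw [swap_mk]
  split_ifs <;>
    simp only [insNth] <;>
    split_ifs <;>
    (try simp only [Function.comp_apply]) <;>
    (try rw [swap_mk]) <;>
    (try split_ifs) <;>
    first | rfl | omega | (congr 1; simp only [Fin.mk.injEq]; omega)

end

section

variable {X : Type*} [TopologicalSpace X] {n : ℕ}

lemma face_transp_self1 (c : Cube (n+1) X) (k : ℕ) (hk : k + 1 < n + 1) (ε : I) :
    cubeFace (transpCube c ⟨k, Nat.lt_of_succ_lt hk⟩ ⟨k+1, hk⟩) ⟨k, Nat.lt_of_succ_lt hk⟩ ε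
      = cubeFace c ⟨k+1, hk⟩ ε := by
  ext t
  simp only [cubeFace, transpCube, ContinuousMap.comp_apply, ContinuousMap.coe_mk]
  exact congrArg c (core_eq1 k hk ε t)

lemma face_transp_self2 (c : Cube (n+1) X) (k : ℕ) (hk : k + 1 < n + 1) (ε : I) :
    cubeFace (transpCube c ⟨k, Nat.lt_of_succ_lt hk⟩ ⟨k+1, hk⟩) ⟨k+1, hk⟩ ε
      = cubeFace c ⟨k, Nat.lt_of_succ_lt hk⟩ ε := by
  ext t
  simp only [cubeFace, transpCube, ContinuousMap.comp_apply, ContinuousMap.coe_mk]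
  exact congrArg c (core_eq2 k hk ε t)

lemma face_transp_lt (c : Cube (n+1) X) (k : ℕ) (hk : k + 1 < n + 1) (j : ℕ) (hj : j < n + 1)
    (hjk : j < k) (ε : I) :
    cubeFace (transpCube c ⟨k, Nat.lt_of_succ_lt hk⟩ ⟨k+1, hk⟩) ⟨j, hj⟩ ε
      = transpCube (cubeFace c ⟨j, hj⟩ ε) ⟨k-1, by omega⟩ ⟨k-1+1, by omega⟩ := by
  ext t
  simp only [cubeFace, transpCube, ContinuousMap.comp_apply, ContinuousMap.coe_mk]
  exact congrArg c (core_lt k hk j hj hjk ε t)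

lemma face_transp_gt (c : Cube (n+1) X) (k : ℕ) (hk : k + 1 < n + 1) (j : ℕ) (hj : j < n + 1)
    (hjk : k + 1 < j) (ε : I) :
    cubeFace (transpCube c ⟨k, Nat.lt_of_succ_lt hk⟩ ⟨k+1, hk⟩) ⟨j, hj⟩ ε
      = transpCube (cubeFace c ⟨j, hj⟩ ε) ⟨k, by omega⟩ ⟨k+1, by omega⟩ := by
  ext t
  simp only [cubeFace, transpCube, ContinuousMap.comp_apply, ContinuousMap.coe_mk]
  exact congrArg c (core_gt k j hj hjk ε t)

end

/-- `D^⊠` is a subcomplex of the normalized cubical chain complex: the boundary of any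
generator `σ + σ ∘ φ_k` again lies in `D^⊠` (in the normalized complex, i.e. modulo
degenerate chains). -/
theorem stmt_1 {X : Type*} [TopologicalSpace X] (n : ℕ) (c : Cube (n + 1) X)
    (k : ℕ) (hk : k + 1 < n + 1) :
    cubeBoundary X n
        (FreeAbelianGroup.of c +
          FreeAbelianGroup.of (transpCube c ⟨k, by omega⟩ ⟨k + 1, hk⟩))
      ∈ Dboxslash X n ⊔ DegenSub X n := by
  apply AddSubgroup.mem_sup_left
  set τ := transpCube c (⟨k, by omega⟩ : Fin (n+1)) ⟨k + 1, hk⟩ with hτ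
  rw [map_add]
  simp only [cubeBoundary, FreeAbelianGroup.lift_apply_of]
  rw [← Finset.sum_add_distrib]
  simp only [← smul_add, sub_add_sub_comm]
  have hab : (⟨k, by omega⟩ : Fin (n+1)) ≠ ⟨k+1, hk⟩ := by
    simp [Fin.ext_iff]
  rw [← Finset.sum_sdiff (Finset.subset_univ ({⟨k, by omega⟩, ⟨k+1, hk⟩} : Finset (Fin (n+1))))]
  apply add_mem
  · apply AddSubgroup.sum_mem
    intro j hj
    obtain ⟨jv, hjv⟩ := j
    have hne : jv ≠ k ∧ jv ≠ k + 1 := by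
      simp only [Finset.mem_sdiff, Finset.mem_insert, Finset.mem_singleton, Fin.ext_iff] at hj
      exact ⟨fun h => hj.2 (Or.inl h), fun h => hj.2 (Or.inr h)⟩
    apply zsmul_mem
    rcases lt_or_gt_of_ne (show jv ≠ k from hne.1) with hlt | hgt
    · rw [face_transp_lt c k hk jv hjv hlt 0, face_transp_lt c k hk jv hjv hlt 1]
      exact sub_mem
        (AddSubgroup.subset_closure ⟨cubeFace c ⟨jv, hjv⟩ 0, k - 1, by omega, rfl⟩)
        (AddSubgroup.subset_closure ⟨cubeFace c ⟨jv, hjv⟩ 1, k - 1, by omega, rfl⟩)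
    · have hgt' : k + 1 < jv := by omega
      rw [face_transp_gt c k hk jv hjv hgt' 0, face_transp_gt c k hk jv hjv hgt' 1]
      exact sub_mem
        (AddSubgroup.subset_closure ⟨cubeFace c ⟨jv, hjv⟩ 0, k, by omega, rfl⟩)
        (AddSubgroup.subset_closure ⟨cubeFace c ⟨jv, hjv⟩ 1, k, by omega, rfl⟩)
  · rw [Finset.sum_pair hab]
    rw [face_transp_self1 c k hk 0, face_transp_self1 c k hk 1,
        face_transp_self2 c k hk 0, face_transp_self2 c k hk 1]
    have : ∀ x y z w : FreeAbelianGroup (Cube n X),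
        ((-1 : ℤ) ^ (((⟨k, by omega⟩ : Fin (n+1)) : ℕ) + 1)) • (x + y - (z + w)) +
        ((-1 : ℤ) ^ (((⟨k+1, hk⟩ : Fin (n+1)) : ℕ) + 1)) • (y + x - (w + z)) = 0 := by
      intro x y z w
      have h1 : (((⟨k, by omega⟩ : Fin (n+1)) : ℕ)) = k := rfl
      have h2 : (((⟨k+1, hk⟩ : Fin (n+1)) : ℕ)) = k + 1 := rfl
      rw [h1, h2, show y + x - (w + z) = x + y - (z + w) by abel,
        show ((-1 : ℤ) ^ (k + 1 + 1)) = -((-1 : ℤ) ^ (k + 1)) by ring, neg_smul,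
        add_neg_cancel]
    rw [this]
    exact zero_mem _
end

section
/- Let X be a topological space and let σ_1, σ_2 : [0,1]^i → X be singular cubes that fit together, meaning σ_1 ∘ δ_{i,1} = σ_2 ∘ δ_{i,0}. Let f : [0,1]^{i-1} → [0,1] be continuous with f^{-1}(0) contained in the set where σ_1 is independent of its last coordinate, and f^{-1}(1) contained in the set where σ_2 is independent of its last coordinate. Then the map σ_1 #_f σ_2 : [0,1]^i → X defined by (t_1,…,t_i) ↦ σ_1(t_1,…,t_{i-1}, t_i/f(t_1,…,t_{i-1})) if t_i ≤ f(t_1,…,t_{i-1}) and σ_2(t_1,…,t_{i-1}, (t_i - f)/(1-f)) otherwise, is well-defined and continuous. -/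
open unitInterval

private lemma tube_cont {X A B : Type*} [TopologicalSpace X] [TopologicalSpace A]
    [TopologicalSpace B] [CompactSpace B] (sig : C(A × B, X)) (phi : A × B → B)
    (x₀ : A × B) (hconst : ∀ u u' : B, sig (x₀.1, u) = sig (x₀.1, u')) :
    ContinuousAt (fun x : A × B => sig (x.1, phi x)) x₀ := by
  rw [ContinuousAt, tendsto_nhds]
  intro V hV hmem
  have hsub : ({x₀.1} : Set A) ×ˢ (Set.univ : Set B) ⊆ sig ⁻¹' V := by
    rintro ⟨a, b⟩ ⟨ha, -⟩
    simp only [Set.mem_singleton_iff] at ha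
    subst ha
    simpa [hconst b (phi x₀)] using hmem
  obtain ⟨u, v, hu, _, hsu, hsv, huv⟩ :=
    generalized_tube_lemma isCompact_singleton isCompact_univ
      (hV.preimage sig.continuous) hsub
  filter_upwards [(hu.preimage continuous_fst).mem_nhds
    (show x₀.1 ∈ u from hsu rfl)] with x hx
  exact huv ⟨hx, hsv (Set.mem_univ _)⟩

/-- Splitting/gluing of singular cubes: if `σ₁, σ₂ : [0,1]^{n} × [0,1] → X` are singular
cubes which fit together (`σ₁(·,1) = σ₂(·,0)`), and `f : [0,1]^n → [0,1]` is continuous with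
`f⁻¹(0)` contained in the set where `σ₁` is independent of its last coordinate and `f⁻¹(1)`
contained in the set where `σ₂` is independent of its last coordinate, then the glued cube
`σ₁ #_f σ₂`, rescaled by `f` in the last coordinate, is well defined and continuous. -/
theorem stmt_8 {X : Type*} [TopologicalSpace X] (n : ℕ)
    (σ₁ σ₂ : C((Fin n → I) × I, X))
    (hfit : ∀ t : Fin n → I, σ₁ (t, 1) = σ₂ (t, 0))
    (f : C((Fin n → I), I))
    (h0 : ∀ t : Fin n → I, f t = 0 → ∀ s s' : I, σ₁ (t, s) = σ₁ (t, s'))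
    (h1 : ∀ t : Fin n → I, f t = 1 → ∀ s s' : I, σ₂ (t, s) = σ₂ (t, s')) :
    ∃ g : (Fin n → I) × I → X,
      Continuous g ∧
      (∀ (t : Fin n → I) (s : I), (0 : ℝ) < f t → (s : ℝ) ≤ f t →
        g (t, s) = σ₁ (t, Set.projIcc 0 1 zero_le_one ((s : ℝ) / (f t : ℝ)))) ∧
      (∀ (t : Fin n → I) (s : I), (f t : ℝ) ≤ s → (f t : ℝ) < 1 →
        g (t, s) = σ₂ (t, Set.projIcc 0 1 zero_le_one (((s : ℝ) - (f t : ℝ)) / (1 - (f t : ℝ))))) := by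
  classical
  set F : (Fin n → I) × I → X := fun x =>
    σ₁ (x.1, Set.projIcc 0 1 zero_le_one ((x.2 : ℝ) / (f x.1 : ℝ))) with hF_def
  set G : (Fin n → I) × I → X := fun x =>
    σ₂ (x.1, Set.projIcc 0 1 zero_le_one (((x.2 : ℝ) - (f x.1 : ℝ)) / (1 - (f x.1 : ℝ)))) with hG_def
  have hcont_coe_snd : Continuous fun x : (Fin n → I) × I => ((x.2 : ℝ)) :=
    continuous_subtype_val.comp continuous_snd
  have hcont_f : Continuous fun x : (Fin n → I) × I => ((f x.1 : ℝ)) :=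
    continuous_subtype_val.comp (f.continuous.comp continuous_fst)
  have hF : Continuous F := by
    rw [continuous_iff_continuousAt]
    intro x₀
    by_cases h : f x₀.1 = 0
    · exact tube_cont σ₁ _ x₀ (fun u u' => h0 x₀.1 h u u')
    · have hne : (f x₀.1 : ℝ) ≠ 0 := fun hh => h (Subtype.ext hh)
      apply σ₁.continuous.continuousAt.comp
      apply ContinuousAt.prodMk continuous_fst.continuousAt
      exact (continuous_projIcc.continuousAt).comp
        ((hcont_coe_snd.continuousAt).div (hcont_f.continuousAt) hne)
  have hG : Continuous G := by
    rw [continuous_iff_continuousAt]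
    intro x₀
    by_cases h : f x₀.1 = 1
    · exact tube_cont σ₂ _ x₀ (fun u u' => h1 x₀.1 h u u')
    · have hne : (1 : ℝ) - (f x₀.1 : ℝ) ≠ 0 := by
        rw [sub_ne_zero]
        intro hh
        exact h (Subtype.ext (by rw [← hh]; norm_num))
      apply σ₂.continuous.continuousAt.comp
      apply ContinuousAt.prodMk continuous_fst.continuousAt
      exact (continuous_projIcc.continuousAt).comp
        (((hcont_coe_snd.continuousAt).sub hcont_f.continuousAt).div
          (continuousAt_const.sub hcont_f.continuousAt) hne)
  have hagree : ∀ x : (Fin n → I) × I, ((x.2 : ℝ)) = ((f x.1 : ℝ)) → F x = G x := by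
    rintro ⟨t, s⟩ hx
    simp only at hx
    by_cases hf0 : (f t : ℝ) = 0
    · have hs0 : (s : ℝ) = 0 := hx.trans hf0
      have : F (t, s) = σ₁ (t, 0) := by
        simp [hF_def, hs0, Set.projIcc_left]
      rw [this, h0 t (Subtype.ext hf0) 0 1, hfit]
      simp [hG_def, hs0, hf0, Set.projIcc_left]
    · have h1' : F (t, s) = σ₁ (t, 1) := by
        simp [hF_def, hx, div_self hf0, Set.projIcc_right]
      have h2' : G (t, s) = σ₂ (t, 0) := by
        simp [hG_def, hx, sub_self, zero_div, Set.projIcc_left]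
      rw [h1', h2', hfit]
  refine ⟨fun x => if ((x.2 : ℝ)) ≤ ((f x.1 : ℝ)) then F x else G x,
    Continuous.if_le hF hG hcont_coe_snd hcont_f hagree, ?_, ?_⟩
  · intro t s _ hs
    simp only
    rw [if_pos hs]
  · intro t s hs hlt
    by_cases hle : (s : ℝ) ≤ (f t : ℝ)
    · have heq : (s : ℝ) = (f t : ℝ) := le_antisymm hle hs
      simp only
      rw [if_pos hle, hagree (t, s) heq]
    · simp only
      rw [if_neg hle]
end
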